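/- Let χ_i and χ_j be distinct irreducible complex characters of a finite group G. Then their 2-characters are orthogonal: ∑_{(g,h) ∈ G×G} (χ_i(g)χ_i(h) − χ_i(gh)) · conj(χ_j(g)χ_j(h) − χ_j(gh)) = 0. -/

import Mathlib

open FDRep

section Aux

open Module LinearMap Representation CategoryTheory



theorem my_char_inv {G : Type} [Group G] [Fintype G] (V : FDRep ℂ G) (g : G) :
    V.character g⁻¹ = starRingEnd ℂ (V.character g) := by
  classical
  set f : Module.End ℂ V := V.ρ g with hf
  set n := orderOf g with hn
  have hnpos : 0 < n := orderOf_pos g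
  have hfn : f ^ n = 1 := by rw [hf, ← map_pow, hn, pow_orderOf_eq_one, map_one]
  have haeval : Polynomial.aeval f (Polynomial.X ^ n - 1 : Polynomial ℂ) = 0 := by
    simp [hfn]
  have hsq : Squarefree (Polynomial.X ^ n - 1 : Polynomial ℂ) := by
    have h1 := Polynomial.separable_X_pow_sub_C (1 : ℂ)
      (by exact_mod_cast Nat.cast_ne_zero.mpr hnpos.ne') one_ne_zero
    simpa using h1.squarefree
  have hss : f.IsFinitelySemisimple :=
    (Module.End.isSemisimple_of_squarefree_aeval_eq_zero hsq haeval).isFinitelySemisimple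
  have htop : ⨆ μ : ℂ, f.eigenspace μ = ⊤ := by
    have h1 := Module.End.iSup_maxGenEigenspace_eq_top f
    simp_rw [hss.maxGenEigenspace_eq_eigenspace] at h1
    exact h1
  have hint : DirectSum.IsInternal (fun μ : ℂ => f.eigenspace μ) :=
    (DirectSum.isInternal_submodule_iff_iSupIndep_and_iSup_eq_top _).mpr
      ⟨f.eigenspaces_iSupIndep, htop⟩
  have hfin : {μ : ℂ | f.eigenspace μ ≠ ⊥}.Finite :=
    WellFoundedGT.finite_ne_bot_of_iSupIndep f.eigenspaces_iSupIndep
  have hcomm : V.ρ g⁻¹ * f = f * V.ρ g⁻¹ := by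
    rw [hf, ← map_mul, ← map_mul, inv_mul_cancel, mul_inv_cancel]
  have hmap : ∀ μ : ℂ, Set.MapsTo f (f.eigenspace μ) (f.eigenspace μ) := by
    intro μ x hx
    rw [SetLike.mem_coe, Module.End.mem_eigenspace_iff] at hx ⊢
    rw [hx, map_smul, hx]
  have hmap' : ∀ μ : ℂ, Set.MapsTo (V.ρ g⁻¹) (f.eigenspace μ) (f.eigenspace μ) := by
    intro μ x hx
    rw [SetLike.mem_coe, Module.End.mem_eigenspace_iff] at hx ⊢
    have := LinearMap.congr_fun hcomm x
    simp only [Module.End.mul_apply] at this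
    rw [← this, hx, map_smul]
  -- each eigenvalue with nonzero eigenspace satisfies μ ^ n = 1
  have heig : ∀ μ : ℂ, f.eigenspace μ ≠ ⊥ → μ ^ n = 1 := by
    intro μ hμ
    obtain ⟨x, hx, hx0⟩ := Submodule.exists_mem_ne_zero_of_ne_bot hμ
    rw [Module.End.mem_eigenspace_iff] at hx
    have hpow : ∀ k : ℕ, (f ^ k) x = μ ^ k • x := by
      intro k
      induction k with
      | zero => simp
      | succ k ih => rw [pow_succ, pow_succ, Module.End.mul_apply, hx, map_smul, ih,
          smul_smul, mul_comm]
    have := hpow n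
    rw [hfn] at this
    simp only [Module.End.one_apply] at this
    have h2 : (μ ^ n - 1) • x = 0 := by rw [sub_smul, one_smul, ← this, sub_self]
    rcases smul_eq_zero.mp h2 with h3 | h3
    · exact sub_eq_zero.mp h3
    · exact absurd h3 hx0
  have hres : ∀ μ : ℂ, trace ℂ (f.eigenspace μ) (f.restrict (hmap μ))
      = μ * (finrank ℂ (f.eigenspace μ) : ℂ) := by
    intro μ
    have hsc : f.restrict (hmap μ) = μ • (1 : Module.End ℂ (f.eigenspace μ)) := by
      refine LinearMap.ext fun x => Subtype.ext ?_
      have hx := x.2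
      rw [Module.End.mem_eigenspace_iff] at hx
      simp [LinearMap.restrict_coe_apply, hx]
      exact hx
    rw [hsc, map_smul, trace_one]
    simp [smul_eq_mul]
  have hres' : ∀ μ : ℂ, f.eigenspace μ ≠ ⊥ →
      trace ℂ (f.eigenspace μ) ((V.ρ g⁻¹).restrict (hmap' μ))
        = starRingEnd ℂ μ * (finrank ℂ (f.eigenspace μ) : ℂ) := by
    intro μ hμ
    have hμn := heig μ hμ
    have hμ0 : μ ≠ 0 := by
      intro h0
      rw [h0, zero_pow hnpos.ne'] at hμn
      exact zero_ne_one hμn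
    have habs : ‖μ‖ = 1 := Complex.norm_eq_one_of_pow_eq_one hμn hnpos.ne'
    have hconj : starRingEnd ℂ μ = μ⁻¹ := by
      have h1 : μ * starRingEnd ℂ μ = 1 := by
        rw [Complex.mul_conj, Complex.normSq_eq_norm_sq, habs]
        norm_num
      exact eq_inv_of_mul_eq_one_right h1
    have hsc : (V.ρ g⁻¹).restrict (hmap' μ) = μ⁻¹ • (1 : Module.End ℂ (f.eigenspace μ)) := by
      refine LinearMap.ext fun x => Subtype.ext ?_
      have hx := x.2
      rw [Module.End.mem_eigenspace_iff] at hx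
      have key : ∀ v : V.V, (V.ρ g⁻¹) (f v) = v := by
        intro v
        rw [hf, ← Module.End.mul_apply, ← map_mul, inv_mul_cancel, map_one, Module.End.one_apply]
      have h2 : μ • (V.ρ g⁻¹) (x : V) = (x : V) := by
        rw [← map_smul, ← hx]; exact key _
      have h3 : (V.ρ g⁻¹) (x : V) = μ⁻¹ • (x : V) := ((inv_smul_eq_iff₀ hμ0).mpr h2.symm).symm
      simp [LinearMap.restrict_coe_apply, h3]
      exact h3
    rw [hsc, map_smul, trace_one, hconj]
    simp [smul_eq_mul]
  have h1 := LinearMap.trace_eq_sum_trace_restrict' hint hfin hmap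
  have h2 := LinearMap.trace_eq_sum_trace_restrict' hint hfin hmap'
  show trace ℂ V (V.ρ g⁻¹) = starRingEnd ℂ (trace ℂ V (V.ρ g))
  rw [h2, ← hf, h1, map_sum]
  refine Finset.sum_congr rfl fun μ hμ => ?_
  have hne : f.eigenspace μ ≠ ⊥ := by simpa using hμ
  rw [hres μ, hres' μ hne, map_mul, map_natCast]


theorem my_sum_shift {G : Type} [Group G] [Fintype G]
    (V W : FDRep ℂ G) [Simple V] [Simple W]
    (h : ¬ Nonempty (V ≅ W)) (x : G) :
    ∑ h' : G, V.character h' * W.character (x * h'⁻¹) = 0 := by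
  classical
  haveI : Invertible (Fintype.card G : ℂ) :=
    invertibleOfNonzero (Nat.cast_ne_zero.mpr Fintype.card_ne_zero)
  letI : Fintype ↑(G) := inferInstanceAs (Fintype G)
  letI : Invertible ((Fintype.card ↑(G) : ℂ)) :=
    invertibleOfNonzero (Nat.cast_ne_zero.mpr Fintype.card_ne_zero)
  have hort : ∑ g : G, V.character g * W.character g⁻¹ = 0 := by
    have h1 := FDRep.char_orthonormal (k := ℂ) (G := G) V W
    rw [if_neg h] at h1
    exact (mul_eq_zero.mp (h1.trans (by simp))).resolve_left
      (inv_ne_zero (Nat.cast_ne_zero.mpr Nat.card_pos.ne'))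
  set ρX : Representation ℂ G (TensorProduct ℂ V (Module.Dual ℂ W)) :=
    Representation.tprod V.ρ (Representation.dual W.ρ) with hρX
  set X : FDRep ℂ G := FDRep.of ρX with hX
  have hXρ : X.ρ = ρX := rfl
  have hXchar : ∀ g : G, X.character g = V.character g * W.character g⁻¹ := by
    intro g
    show trace ℂ _ (ρX g) = _
    rw [hρX, Representation.tprod_apply, trace_tensorProduct', Representation.dual_apply,
      trace_transpose']
    rfl
  have hsum0 : ∑ g : G, X.character g = 0 := by
    simp_rw [hXchar]; exact hort
  have hinv0 : finrank ℂ (invariants X.ρ) = 0 := by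
    have h1 := FDRep.average_char_eq_finrank_invariants X
    rw [hsum0, mul_zero] at h1
    exact_mod_cast h1.symm
  have hbot : invariants ρX = ⊥ := Submodule.finrank_eq_zero.mp hinv0
  have hT : averageMap ρX = 0 := by
    refine LinearMap.ext fun v => ?_
    have h1 := averageMap_invariant ρX v
    rw [hbot] at h1
    simpa using h1
  have hzero : ∑ g : G, ρX g = 0 := by
    have h1 : averageMap ρX = ⅟ (Fintype.card G : ℂ) • ∑ g : G, ρX g := by
      simp only [averageMap, GroupAlgebra.average, map_sum, map_smul,
        MonoidAlgebra.of_apply, asAlgebraHom_single_one]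
    have h2 : (Fintype.card G : ℂ) • averageMap ρX = ∑ g : G, ρX g := by
      rw [h1, smul_smul, mul_invOf_self, one_smul]
    rw [← h2, hT, smul_zero]
  set B : Module.End ℂ (Module.Dual ℂ W) := Module.Dual.transpose (W.ρ x) with hB
  have key : ∀ h' : G, V.character h' * W.character (x * h'⁻¹)
      = trace ℂ _ ((ρX h') * TensorProduct.map LinearMap.id B) := by
    intro h'
    rw [hρX, Representation.tprod_apply, Module.End.mul_eq_comp, ← TensorProduct.map_comp,
      LinearMap.comp_id,
      trace_tensorProduct', Representation.dual_apply, hB, ← Module.Dual.transpose_comp,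
      ← Module.End.mul_eq_comp, ← map_mul, trace_transpose']
    rfl
  calc ∑ h' : G, V.character h' * W.character (x * h'⁻¹)
      = ∑ h' : G, trace ℂ _ ((ρX h') * TensorProduct.map LinearMap.id B) :=
        Finset.sum_congr rfl fun h' _ => key h'
    _ = trace ℂ _ ((∑ h' : G, ρX h') * TensorProduct.map LinearMap.id B) := by
        rw [Finset.sum_mul, map_sum]
    _ = 0 := by rw [hzero, zero_mul, map_zero]

end Aux

theorem stmt_9 {G : Type} [Group G] [Fintype G]
    (V W : FDRep ℂ G) [CategoryTheory.Simple V] [CategoryTheory.Simple W]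
    (h : ¬ Nonempty (V ≅ W)) :
    ∑ g : G, ∑ h' : G,
      (V.character g * V.character h' - V.character (g * h')) *
        starRingEnd ℂ (W.character g * W.character h' - W.character (g * h')) = 0 := by
  classical
  have hc : ∀ u : G, starRingEnd ℂ (W.character u) = W.character u⁻¹ :=
    fun u => (my_char_inv W u).symm
  have key := my_sum_shift V W h
  have inner0 : ∑ u : G, V.character u * W.character u⁻¹ = 0 := by
    have := key 1
    simpa using this
  have S1 : ∑ g : G, ∑ h' : G,
      V.character g * V.character h' * (W.character g⁻¹ * W.character h'⁻¹) = 0 := by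
    refine Finset.sum_eq_zero fun g _ => ?_
    calc ∑ h' : G, V.character g * V.character h' * (W.character g⁻¹ * W.character h'⁻¹)
        = (V.character g * W.character g⁻¹) * ∑ h' : G, V.character h' * W.character h'⁻¹ := by
          rw [Finset.mul_sum]; exact Finset.sum_congr rfl fun h' _ => by ring
      _ = 0 := by rw [inner0, mul_zero]
  have S2 : ∑ g : G, ∑ h' : G,
      V.character g * V.character h' * W.character (h'⁻¹ * g⁻¹) = 0 := by
    refine Finset.sum_eq_zero fun g _ => ?_
    calc ∑ h' : G, V.character g * V.character h' * W.character (h'⁻¹ * g⁻¹)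
        = V.character g * ∑ h' : G, V.character h' * W.character (g⁻¹ * h'⁻¹) := by
          rw [Finset.mul_sum]
          refine Finset.sum_congr rfl fun h' _ => ?_
          rw [FDRep.char_mul_comm W g⁻¹ h'⁻¹]; ring
      _ = 0 := by rw [key g⁻¹, mul_zero]
  have S3 : ∑ g : G, ∑ h' : G,
      V.character (g * h') * (W.character g⁻¹ * W.character h'⁻¹) = 0 := by
    refine Finset.sum_eq_zero fun g _ => ?_
    calc ∑ h' : G, V.character (g * h') * (W.character g⁻¹ * W.character h'⁻¹)
        = ∑ u : G, V.character u * (W.character g⁻¹ * W.character (u⁻¹ * g)) := by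
          refine Fintype.sum_equiv (Equiv.mulLeft g) _ _ fun u => ?_
          simp only [Equiv.coe_mulLeft, mul_inv_rev]
          rw [mul_assoc u⁻¹ g⁻¹ g, inv_mul_cancel, mul_one]
      _ = W.character g⁻¹ * ∑ u : G, V.character u * W.character (g * u⁻¹) := by
          rw [Finset.mul_sum]
          refine Finset.sum_congr rfl fun u _ => ?_
          rw [FDRep.char_mul_comm W g u⁻¹]; ring
      _ = 0 := by rw [key g, mul_zero]
  have S4 : ∑ g : G, ∑ h' : G,
      V.character (g * h') * W.character (h'⁻¹ * g⁻¹) = 0 := by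
    refine Finset.sum_eq_zero fun g _ => ?_
    calc ∑ h' : G, V.character (g * h') * W.character (h'⁻¹ * g⁻¹)
        = ∑ u : G, V.character u * W.character u⁻¹ := by
          refine Fintype.sum_equiv (Equiv.mulLeft g) _ _ fun u => ?_
          simp only [Equiv.coe_mulLeft, mul_inv_rev]
      _ = 0 := inner0
  calc ∑ g : G, ∑ h' : G,
      (V.character g * V.character h' - V.character (g * h')) *
        starRingEnd ℂ (W.character g * W.character h' - W.character (g * h'))
      = ∑ g : G, ∑ h' : G,
        (V.character g * V.character h' * (W.character g⁻¹ * W.character h'⁻¹)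
          - V.character g * V.character h' * W.character (h'⁻¹ * g⁻¹)
          - V.character (g * h') * (W.character g⁻¹ * W.character h'⁻¹)
          + V.character (g * h') * W.character (h'⁻¹ * g⁻¹)) := by
        refine Finset.sum_congr rfl fun g _ => Finset.sum_congr rfl fun h' _ => ?_
        rw [map_sub, map_mul, hc g, hc h', hc (g * h'), mul_inv_rev]
        ring
    _ = 0 := by
        simp only [Finset.sum_sub_distrib, Finset.sum_add_distrib]
        rw [S1, S2, S3, S4]
        ring
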